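/- Let (V; ρ, μ, ν) be a representation of a post-Lie algebra (g, [·,·], ▷). Then the linear map ρ + μ − ν: g → gl(V) is a representation of the sub-adjacent Lie algebra (g, [·,·]_C), where [x,y]_C = x▷y − y▷x + [x,y]. That is, (ρ+μ−ν)([x,y]_C) = (ρ+μ−ν)(x)∘(ρ+μ−ν)(y) − (ρ+μ−ν)(y)∘(ρ+μ−ν)(x). -/
import Mathlib


/-- ρ + μ − ν is a representation of the sub-adjacent Lie algebra. -/
theorem postLie_rep_subadjacent {K : Type*} [Field K] [CharZero K]
    {g : Type*} [LieRing g] [LieAlgebra K g]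
    {V : Type*} [AddCommGroup V] [Module K V]
    (t : g →ₗ[K] g →ₗ[K] g)
    (hpost1 : ∀ x y z : g, t x ⁅y, z⁆ = ⁅t x y, z⁆ + ⁅y, t x z⁆)
    (hpost2 : ∀ x y z : g,
      t ⁅x, y⁆ z = t x (t y z) - t (t x y) z - t y (t x z) + t (t y x) z)
    (ρ μ ν : g →ₗ[K] V →ₗ[K] V)
    (hρ : ∀ (x y : g) (v : V), ρ ⁅x, y⁆ v = ρ x (ρ y v) - ρ y (ρ x v))
    (h1 : ∀ (x y : g) (v : V), ρ (t x y) v = μ x (ρ y v) - ρ y (μ x v))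
    (h2 : ∀ (x y : g) (v : V), ν ⁅x, y⁆ v = ρ x (ν y v) - ρ y (ν x v))
    (h3 : ∀ (x y : g) (v : V),
      μ ⁅x, y⁆ v = μ x (μ y v) - μ (t x y) v - μ y (μ x v) + μ (t y x) v)
    (h4 : ∀ (x y : g) (v : V),
      ν y (ρ x v) = μ x (ν y v) - ν y (μ x v) - ν (t x y) v + ν y (ν x v))
    (r : g → V → V)
    (hr : ∀ (x : g) (v : V), r x v = ρ x v + μ x v - ν x v) :
    ∀ (x y : g) (v : V),
      r (t x y - t y x + ⁅x, y⁆) v = r x (r y v) - r y (r x v) := by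
  have h4' : ∀ (a b : g) (w : V),
      ν (t a b) w = μ a (ν b w) - ν b (μ a w) + ν b (ν a w) - ν b (ρ a w) := by
    intro a b w
    have h := h4 a b w
    rw [h]
    abel
  intro x y v
  simp only [hr, map_sub, map_add, LinearMap.sub_apply, LinearMap.add_apply]
  rw [h1 x y v, h1 y x v, hρ, h2, h3, h4' x y v, h4' y x v]
  abel
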